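/- Let n, i, j be integers with i ≥ j ≥ 0, i + j ≤ n and i + j ≡ n (mod 2), and let δ_i be the remainder of i modulo 2. Then the number of pairs (P,Q) of lattice paths of length n satisfying Q ≤ P, P ≥ 0, Q ≥ 0 and i − j ≤ h(Q) ≤ i + j ≤ h(P) equals the number of pairs (P,Q) of lattice paths of length n satisfying Q ≤ P, h(P) = j + δ_i, h(Q) = −j + δ_i, and min over 0 ≤ a ≤ n of (h_a(P) + h_a(Q))/2 equal to −⌊i/2⌋. -/

import Mathlib

/-- A lattice path of length `n`: each step is `+1` (U) or `-1` (D). -/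
def IsPath {n : ℕ} (P : Fin n → ℤ) : Prop := ∀ l, P l = 1 ∨ P l = -1

/-- Height of the path `P` at `x = a`: sum of the first `a` steps. -/
def ht {n : ℕ} (P : Fin n → ℤ) (a : ℕ) : ℤ :=
  ∑ l ∈ Finset.univ.filter (fun l : Fin n => (l : ℕ) < a), P l

/-- The lowest height of the agreement path `(P+Q)/2`, over `0 ≤ a ≤ n`. -/
def agreeMin {n : ℕ} (P Q : Fin n → ℤ) : ℤ :=
  (Finset.range (n + 1)).inf' Finset.nonempty_range_add_one
    (fun a => (ht P a + ht Q a) / 2)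

set_option linter.unreachableTactic false
set_option linter.unusedTactic false
set_option linter.unusedVariables false
set_option maxHeartbeats 1000000

section basics
variable {n : ℕ}

theorem ht_zero (P : Fin n → ℤ) : ht P 0 = 0 := by simp [ht]

theorem ht_succ (P : Fin n → ℤ) {a : ℕ} (h : a < n) :
    ht P (a+1) = ht P a + P ⟨a, h⟩ := by
  unfold ht
  have : Finset.univ.filter (fun l : Fin n => (l : ℕ) < a + 1)
      = insert ⟨a, h⟩ (Finset.univ.filter (fun l : Fin n => (l : ℕ) < a)) := by
    ext l
    simp only [Finset.mem_filter, Finset.mem_univ, true_and, Finset.mem_insert, Fin.ext_iff]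
    omega
  rw [this, Finset.sum_insert (by simp)]
  ring

theorem ht_stable (P : Fin n → ℤ) {a : ℕ} (h : n ≤ a) : ht P a = ht P n := by
  unfold ht
  congr 1
  ext l
  simp only [Finset.mem_filter, Finset.mem_univ, true_and]
  have := l.isLt
  omega

theorem ht_step {P : Fin n → ℤ} (hP : IsPath P) {a : ℕ} (h : a < n) :
    ht P (a+1) = ht P a + 1 ∨ ht P (a+1) = ht P a - 1 := by
  rw [ht_succ P h]
  rcases hP ⟨a, h⟩ with h' | h' <;> rw [h'] <;> [left; right] <;> ring

theorem ht_parity {P : Fin n → ℤ} (hP : IsPath P) (a : ℕ) (ha : a ≤ n) :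
    (ht P a + a) % 2 = 0 := by
  induction a with
  | zero => simp [ht_zero]
  | succ a ih =>
    have hlt : a < n := ha
    have := ih (le_of_lt hlt)
    rcases ht_step hP hlt with h | h <;> rw [h] <;> push_cast <;> omega

theorem ht_bound {P : Fin n → ℤ} (hP : IsPath P) (a : ℕ) (ha : a ≤ n) :
    -(a:ℤ) ≤ ht P a ∧ ht P a ≤ a := by
  induction a with
  | zero => simp [ht_zero]
  | succ a ih =>
    have hlt : a < n := ha
    have := ih (le_of_lt hlt)
    rcases ht_step hP hlt with h | h <;> rw [h] <;> push_cast <;> omega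

def tail2 (t : ℕ) (A B : Fin n → ℤ) : Fin n → ℤ :=
  fun l => if (l : ℕ) < t then A l else B l

theorem isPath_tail2 {A B : Fin n → ℤ} (hA : IsPath A) (hB : IsPath B) (t : ℕ) :
    IsPath (tail2 t A B) := by
  intro l
  unfold tail2
  split <;> [exact hA l; exact hB l]

theorem isPath_neg {A : Fin n → ℤ} (hA : IsPath A) : IsPath (fun l => -A l) := by
  intro l
  rcases hA l with h | h <;> simp [h]

theorem ht_neg (A : Fin n → ℤ) (a : ℕ) : ht (fun l => -A l) a = -ht A a := by
  unfold ht
  rw [← Finset.sum_neg_distrib]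

theorem ht_tail2_le (A B : Fin n → ℤ) {t a : ℕ} (h : a ≤ t) :
    ht (tail2 t A B) a = ht A a := by
  unfold ht tail2
  apply Finset.sum_congr rfl
  intro l hl
  simp only [Finset.mem_filter] at hl
  have : (l : ℕ) < t := lt_of_lt_of_le hl.2 h
  simp [this]

theorem ht_tail2_ge (A B : Fin n → ℤ) {t a : ℕ} (ht' : t ≤ a) (han : a ≤ n) :
    ht (tail2 t A B) a = ht A t + ht B a - ht B t := by
  induction a, ht' using Nat.le_induction with
  | base => rw [ht_tail2_le A B (le_refl t)]; ring
  | succ a ha ih =>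
    have hlt : a < n := han
    rw [ht_succ _ hlt, ht_succ B hlt, ih (le_of_lt hlt)]
    have : tail2 t A B ⟨a, hlt⟩ = B ⟨a, hlt⟩ := by
      unfold tail2; simp only [Fin.val_mk]; rw [if_neg (by omega)]
    rw [this]; ring

theorem path_decide_inj {P Q : Fin n → ℤ} (hP : IsPath P) (hQ : IsPath Q)
    (h : (fun l => decide (P l = 1)) = (fun l => decide (Q l = 1))) : P = Q := by
  ext l
  have h1 := congrFun h l
  simp only [decide_eq_decide] at h1
  rcases hP l with h2 | h2 <;> rcases hQ l with h3 | h3 <;>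
    simp only [h2, h3] at h1 ⊢ <;> first | rfl | simp at h1

theorem path_finite (p : (Fin n → ℤ) → Prop) (h : ∀ P, p P → IsPath P) :
    Finite {P : Fin n → ℤ // p P} := by
  apply Finite.of_injective (fun P => (fun l => decide (P.val l = 1) : Fin n → Bool))
  rintro ⟨P, hP⟩ ⟨Q, hQ⟩ hEq
  simpa using path_decide_inj (h P hP) (h Q hQ) hEq

theorem pair_finite (p : ((Fin n → ℤ) × (Fin n → ℤ)) → Prop)
    (h : ∀ x, p x → IsPath x.1 ∧ IsPath x.2) :
    Finite {x : (Fin n → ℤ) × (Fin n → ℤ) // p x} := by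
  apply Finite.of_injective (fun x =>
    ((fun l => decide (x.val.1 l = 1), fun l => decide (x.val.2 l = 1)) :
      (Fin n → Bool) × (Fin n → Bool)))
  rintro ⟨⟨P, Q⟩, hPQ⟩ ⟨⟨P', Q'⟩, hPQ'⟩ hEq
  rw [Prod.ext_iff] at hEq
  obtain ⟨h1, h2⟩ := hEq
  have e1 := path_decide_inj (h _ hPQ).1 (h _ hPQ').1 h1
  have e2 := path_decide_inj (h _ hPQ).2 (h _ hPQ').2 h2
  simp only [Subtype.mk.injEq, Prod.mk.injEq]
  exact ⟨e1, e2⟩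

theorem card_split {α : Type*} (p q r : α → Prop) (h : ∀ x, p x ↔ (q x ∨ r x))
    (hd : ∀ x, q x → r x → False) (hf : Finite {x // p x}) :
    Nat.card {x // p x} = Nat.card {x // q x} + Nat.card {x // r x} := by
  classical
  have hq : ∀ x, q x → p x := fun x hx => (h x).mpr (Or.inl hx)
  have hr : ∀ x, r x → p x := fun x hx => (h x).mpr (Or.inr hx)
  have : Finite {x // q x} := Finite.of_injective
    (fun x => (⟨x.val, hq _ x.2⟩ : {x // p x})) (by rintro ⟨a,_⟩ ⟨b,_⟩ hab; simpa using hab)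
  have : Finite {x // r x} := Finite.of_injective
    (fun x => (⟨x.val, hr _ x.2⟩ : {x // p x})) (by rintro ⟨a,_⟩ ⟨b,_⟩ hab; simpa using hab)
  have e : {x // p x} ≃ {x // q x} ⊕ {x // r x} :=
    { toFun := fun x => if hx : q x.val then Sum.inl ⟨x.val, hx⟩ else
        Sum.inr ⟨x.val, ((h x.val).mp x.2).resolve_left hx⟩
      invFun := fun s => s.elim (fun x => ⟨x.val, hq _ x.2⟩) (fun x => ⟨x.val, hr _ x.2⟩)
      left_inv := by rintro ⟨x, hx⟩; by_cases hqx : q x <;> simp [hqx]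
      right_inv := by
        rintro (⟨x, hx⟩ | ⟨x, hx⟩)
        · simp [hx]
        · have : ¬ q x := fun hqx => hd x hqx hx
          simp [this] }
  rw [Nat.card_congr e, Nat.card_sum]

theorem card_prop_congr {α : Type*} {p q : α → Prop} (h : ∀ x, p x ↔ q x) :
    Nat.card {x // p x} = Nat.card {x // q x} :=
  Nat.card_congr (Equiv.subtypeEquivRight h)

theorem card_pair_prod (pP pQ : (Fin n → ℤ) → Prop) :
    Nat.card {x : (Fin n → ℤ) × (Fin n → ℤ) // pP x.1 ∧ pQ x.2} =
    Nat.card {P : Fin n → ℤ // pP P} * Nat.card {Q : Fin n → ℤ // pQ Q} := by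
  rw [← Nat.card_prod]
  exact Nat.card_congr
    { toFun := fun x => (⟨x.val.1, x.2.1⟩, ⟨x.val.2, x.2.2⟩)
      invFun := fun x => ⟨(x.1.val, x.2.val), x.1.2, x.2.2⟩
      left_inv := fun x => rfl
      right_inv := fun x => rfl }

/-- first hit: least `t` with `g t ≤ v`, given start above and bounded down-steps. -/
theorem first_hit {g : ℕ → ℤ} {v c : ℤ} {N : ℕ} (hc : 1 ≤ c) (h0 : v ≤ g 0)
    (hstep : ∀ a, g a - c ≤ g (a+1)) (hex : ∃ a, a ≤ N ∧ g a ≤ v) :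
    ∃ t, t ≤ N ∧ (∀ a < t, v < g a) ∧ g t ≤ v ∧ v + 1 - c ≤ g t := by
  classical
  have hex' : ∃ a, g a ≤ v := ⟨hex.choose, hex.choose_spec.2⟩
  refine ⟨Nat.find hex', le_trans (Nat.find_min' hex' hex.choose_spec.2) hex.choose_spec.1,
    fun a ha => ?_, Nat.find_spec hex', ?_⟩
  · have := Nat.find_min hex' ha
    omega
  · rcases Nat.eq_zero_or_pos (Nat.find hex') with h | h
    · rw [h]; have := Nat.find_spec hex'; rw [h] at this; omega
    · obtain ⟨t', ht'⟩ : ∃ t', Nat.find hex' = t' + 1 := ⟨Nat.find hex' - 1, by omega⟩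
      have h1 : v < g t' := by
        have := Nat.find_min hex' (m := t') (by omega); omega
      have := hstep t'
      rw [ht']
      omega

end basics

section refl1
variable {n : ℕ}

theorem card_end_neg (y : ℤ) :
    Nat.card {P : Fin n → ℤ // IsPath P ∧ ht P n = y} =
    Nat.card {P : Fin n → ℤ // IsPath P ∧ ht P n = -y} := by
  apply Nat.card_congr
  refine
    { toFun := fun x => ⟨fun l => -x.val l, isPath_neg x.2.1, by rw [ht_neg, x.2.2]⟩
      invFun := fun x => ⟨fun l => -x.val l, isPath_neg x.2.1, by rw [ht_neg, x.2.2]; ring⟩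
      left_inv := ?_, right_inv := ?_ } <;>
  · rintro ⟨P, hP⟩
    simp

noncomputable def rmap (w : ℤ) (P : Fin n → ℤ) : Fin n → ℤ :=
  if h : ∃ a, a ≤ n ∧ ht P a ≤ -w-1 then tail2 (Nat.find h) P (fun l => -P l) else P

theorem rmap_spec {w : ℤ} {P : Fin n → ℤ} (hP : IsPath P) (hw : 0 ≤ w)
    (h : ∃ a, a ≤ n ∧ ht P a ≤ -w-1) :
    Nat.find h ≤ n ∧ ht P (Nat.find h) = -w-1 ∧ ∀ a < Nat.find h, -w ≤ ht P a := by
  obtain ⟨hn, hle⟩ := Nat.find_spec h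
  have hmin : ∀ a < Nat.find h, -w ≤ ht P a := by
    intro a ha
    have h1 := Nat.find_min h ha
    have h2 : a ≤ n := by omega
    push_neg at h1
    have := h1 h2
    omega
  refine ⟨hn, ?_, hmin⟩
  rcases Nat.eq_zero_or_pos (Nat.find h) with h0 | h0
  · rw [h0] at hle ⊢
    rw [ht_zero] at hle ⊢
    omega
  · obtain ⟨t', ht'⟩ : ∃ t', Nat.find h = t' + 1 := ⟨Nat.find h - 1, by omega⟩
    have h1 : -w ≤ ht P t' := hmin t' (by omega)
    have h2 : t' < n := by omega
    rcases ht_step hP h2 with h3 | h3 <;> rw [ht'] at hle ⊢ <;> omega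

theorem rmap_props {w : ℤ} {P : Fin n → ℤ} (hP : IsPath P) (hw : 0 ≤ w)
    (h : ∃ a, a ≤ n ∧ ht P a ≤ -w-1) :
    IsPath (rmap w P) ∧
    (∀ a ≤ n, Nat.find h ≤ a → ht (rmap w P) a = -(2*w+2) - ht P a) ∧
    (∀ a ≤ Nat.find h, ht (rmap w P) a = ht P a) ∧
    (∃ a, a ≤ n ∧ ht (rmap w P) a ≤ -w-1) ∧
    rmap w (rmap w P) = P := by
  obtain ⟨hTn, hTeq, hTmin⟩ := rmap_spec hP hw h
  have hdef : rmap w P = tail2 (Nat.find h) P (fun l => -P l) := dif_pos h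
  have hpath : IsPath (rmap w P) := by
    rw [hdef]; exact isPath_tail2 hP (isPath_neg hP) _
  have hge : ∀ a ≤ n, Nat.find h ≤ a → ht (rmap w P) a = -(2*w+2) - ht P a := by
    intro a han hTa
    rw [hdef, ht_tail2_ge _ _ hTa han, ht_neg, ht_neg, hTeq]
    ring
  have hle : ∀ a ≤ Nat.find h, ht (rmap w P) a = ht P a := by
    intro a ha
    rw [hdef, ht_tail2_le _ _ ha]
  have hex : ∃ a, a ≤ n ∧ ht (rmap w P) a ≤ -w-1 := by
    refine ⟨Nat.find h, hTn, ?_⟩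
    rw [hle _ (le_refl _), hTeq]
  refine ⟨hpath, hge, hle, hex, ?_⟩
  -- involution
  have hfind : Nat.find hex = Nat.find h := by
    apply le_antisymm
    · apply Nat.find_min' hex
      exact ⟨hTn, by rw [hle _ (le_refl _), hTeq]⟩
    · by_contra hc
      push_neg at hc
      have h1 := Nat.find_spec hex
      have h2 := hle _ (le_of_lt hc)
      have h3 := hTmin _ hc
      rw [h2] at h1
      omega
  have hdef2 : rmap w (rmap w P) = tail2 (Nat.find hex) (rmap w P) (fun l => -(rmap w P) l) :=
    dif_pos hex
  rw [hdef2, hfind]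
  funext l
  unfold tail2
  by_cases hl : (l : ℕ) < Nat.find h
  · simp only [if_pos hl]
    rw [hdef]
    unfold tail2
    simp only [if_pos hl]
  · simp only [if_neg hl]
    rw [hdef]
    unfold tail2
    simp only [if_neg hl]
    ring

theorem refl1D (w x : ℤ) (hw : 0 ≤ w) (hx : -w-1 ≤ x) :
    Nat.card {P : Fin n → ℤ // IsPath P ∧ (∀ a ≤ n, -w ≤ ht P a) ∧ ht P n = x}
      + Nat.card {P : Fin n → ℤ // IsPath P ∧ ht P n = x + (2*w+2)} =
    Nat.card {P : Fin n → ℤ // IsPath P ∧ ht P n = x} := by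
  have hsplit := card_split (fun P : Fin n → ℤ => IsPath P ∧ ht P n = x)
    (fun P => IsPath P ∧ (∀ a ≤ n, -w ≤ ht P a) ∧ ht P n = x)
    (fun P => IsPath P ∧ (∃ a, a ≤ n ∧ ht P a ≤ -w-1) ∧ ht P n = x)
    (by
      intro P
      constructor
      · rintro ⟨h1, h2⟩
        by_cases hwall : ∀ a ≤ n, -w ≤ ht P a
        · exact Or.inl ⟨h1, hwall, h2⟩
        · push_neg at hwall
          obtain ⟨a, ha, hlt⟩ := hwall
          exact Or.inr ⟨h1, ⟨a, ha, by omega⟩, h2⟩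
      · rintro (⟨h1, _, h2⟩ | ⟨h1, _, h2⟩) <;> exact ⟨h1, h2⟩)
    (by
      rintro P ⟨_, hwall, _⟩ ⟨_, ⟨a, ha, hle⟩, _⟩
      have := hwall a ha
      omega)
    (path_finite _ (fun P hp => hp.1))
  rw [hsplit]
  congr 1
  have e2 : Nat.card {P : Fin n → ℤ // IsPath P ∧ (∃ a, a ≤ n ∧ ht P a ≤ -w-1) ∧ ht P n = x}
      = Nat.card {P : Fin n → ℤ // IsPath P ∧ ht P n = -(x + (2*w+2))} := by
    apply Nat.card_congr
    refine
      { toFun := fun y => ⟨rmap w y.val, ?_, ?_⟩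
        invFun := fun y => ⟨rmap w y.val, ?_, ?_, ?_⟩
        left_inv := ?_, right_inv := ?_ }
    · exact (rmap_props y.2.1 hw y.2.2.1).1
    · obtain ⟨_, hge, _, _, _⟩ := rmap_props y.2.1 hw y.2.2.1
      rw [hge n (le_refl n) (rmap_spec y.2.1 hw y.2.2.1).1, y.2.2.2]
      ring
    · -- invFun: existence for target side
      exact (rmap_props y.2.1 hw (⟨n, le_refl n, by rw [y.2.2]; omega⟩ :
        ∃ a, a ≤ n ∧ ht y.val a ≤ -w-1)).1
    · exact (rmap_props y.2.1 hw (⟨n, le_refl n, by rw [y.2.2]; omega⟩ :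
        ∃ a, a ≤ n ∧ ht y.val a ≤ -w-1)).2.2.2.1
    · have hy : ∃ a, a ≤ n ∧ ht y.val a ≤ -w-1 := ⟨n, le_refl n, by rw [y.2.2]; omega⟩
      obtain ⟨_, hge, _, _, _⟩ := rmap_props y.2.1 hw hy
      rw [hge n (le_refl n) (rmap_spec y.2.1 hw hy).1, y.2.2]
      ring
    · rintro ⟨P, hP, hex, hend⟩
      simp only [Subtype.mk.injEq]
      exact (rmap_props hP hw hex).2.2.2.2
    · rintro ⟨P, hP, hend⟩
      simp only [Subtype.mk.injEq]
      have hy : ∃ a, a ≤ n ∧ ht P a ≤ -w-1 := ⟨n, le_refl n, by rw [hend]; omega⟩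
      exact (rmap_props hP hw hy).2.2.2.2
  rw [e2, ← card_end_neg]

end refl1
section count1
variable {n : ℕ}

noncomputable def fE (n : ℕ) (x : ℤ) : ℕ := Nat.card {P : Fin n → ℤ // IsPath P ∧ ht P n = x}
noncomputable def wE (n : ℕ) (w x : ℤ) : ℕ :=
  Nat.card {P : Fin n → ℤ // IsPath P ∧ (∀ a ≤ n, -w ≤ ht P a) ∧ ht P n = x}
noncomputable def gE (n : ℕ) (w x : ℤ) : ℕ :=
  Nat.card {P : Fin n → ℤ // IsPath P ∧ (∀ a ≤ n, -w ≤ ht P a) ∧ x ≤ ht P n}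
noncomputable def hE (n : ℕ) (w x y : ℤ) : ℕ :=
  Nat.card {P : Fin n → ℤ // IsPath P ∧ (∀ a ≤ n, -w ≤ ht P a) ∧ x ≤ ht P n ∧ ht P n ≤ y}

theorem card_zero_end {x : ℤ} (p : (Fin n → ℤ) → Prop)
    (himp : ∀ P, p P → IsPath P ∧ ht P n = x) (hbad : (n:ℤ) < x ∨ (x + n) % 2 ≠ 0) :
    Nat.card {P : Fin n → ℤ // p P} = 0 := by
  have : IsEmpty {P : Fin n → ℤ // p P} := by
    constructor
    rintro ⟨P, hP⟩
    obtain ⟨h1, h2⟩ := himp P hP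
    have hb := (ht_bound h1 n (le_refl n)).2
    have hp := ht_parity h1 n (le_refl n)
    rw [h2] at hb hp
    rcases hbad with h | h <;> omega
  simp

theorem fE_big {x : ℤ} (h : (n:ℤ) < x) : fE n x = 0 :=
  card_zero_end _ (fun _ hp => hp) (Or.inl h)

theorem gE_split (w x : ℤ) (hpar : (x + n) % 2 = 0) :
    gE n w x = wE n w x + gE n w (x+2) := by
  have s1 := card_split
    (fun P : Fin n → ℤ => IsPath P ∧ (∀ a ≤ n, -w ≤ ht P a) ∧ x ≤ ht P n)
    (fun P => IsPath P ∧ (∀ a ≤ n, -w ≤ ht P a) ∧ ht P n = x)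
    (fun P => IsPath P ∧ (∀ a ≤ n, -w ≤ ht P a) ∧ x + 1 ≤ ht P n)
    (by intro P; constructor
        · rintro ⟨h1, h2, h3⟩
          rcases eq_or_lt_of_le h3 with h | h
          · exact Or.inl ⟨h1, h2, h.symm⟩
          · exact Or.inr ⟨h1, h2, h⟩
        · rintro (⟨h1, h2, h3⟩ | ⟨h1, h2, h3⟩) <;> exact ⟨h1, h2, by omega⟩)
    (by rintro P ⟨_, _, h3⟩ ⟨_, _, h3'⟩; omega)
    (path_finite _ (fun P hp => hp.1))
  have s2 := card_split
    (fun P : Fin n → ℤ => IsPath P ∧ (∀ a ≤ n, -w ≤ ht P a) ∧ x + 1 ≤ ht P n)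
    (fun P => IsPath P ∧ (∀ a ≤ n, -w ≤ ht P a) ∧ ht P n = x + 1)
    (fun P => IsPath P ∧ (∀ a ≤ n, -w ≤ ht P a) ∧ x + 2 ≤ ht P n)
    (by intro P; constructor
        · rintro ⟨h1, h2, h3⟩
          rcases eq_or_lt_of_le h3 with h | h
          · exact Or.inl ⟨h1, h2, h.symm⟩
          · exact Or.inr ⟨h1, h2, by omega⟩
        · rintro (⟨h1, h2, h3⟩ | ⟨h1, h2, h3⟩) <;> exact ⟨h1, h2, by omega⟩)
    (by rintro P ⟨_, _, h3⟩ ⟨_, _, h3'⟩; omega)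
    (path_finite _ (fun P hp => hp.1))
  have hz : Nat.card {P : Fin n → ℤ // IsPath P ∧ (∀ a ≤ n, -w ≤ ht P a) ∧ ht P n = x + 1}
      = 0 :=
    card_zero_end _ (fun P hp => ⟨hp.1, hp.2.2⟩) (Or.inr (by omega))
  unfold gE wE
  rw [s1, s2, hz]
  omega

theorem gE_big {w x : ℤ} (h : (n:ℤ) < x) : gE n w x = 0 :=
  Nat.card_eq_zero.mpr (Or.inl (by
    constructor
    rintro ⟨P, h1, _, h3⟩
    have hb := (ht_bound h1 n (le_refl n)).2
    omega))

theorem gE_window (w x y : ℤ) (hxy : x ≤ y + 1) (hpar : (y + 1 + n) % 2 ≠ 0) :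
    gE n w x = hE n w x y + gE n w (y+2) := by
  have s1 := card_split
    (fun P : Fin n → ℤ => IsPath P ∧ (∀ a ≤ n, -w ≤ ht P a) ∧ x ≤ ht P n)
    (fun P => IsPath P ∧ (∀ a ≤ n, -w ≤ ht P a) ∧ x ≤ ht P n ∧ ht P n ≤ y)
    (fun P => IsPath P ∧ (∀ a ≤ n, -w ≤ ht P a) ∧ y + 1 ≤ ht P n)
    (by intro P; constructor
        · rintro ⟨h1, h2, h3⟩
          by_cases h : ht P n ≤ y
          · exact Or.inl ⟨h1, h2, h3, h⟩
          · exact Or.inr ⟨h1, h2, by omega⟩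
        · rintro (⟨h1, h2, h3, _⟩ | ⟨h1, h2, h3⟩)
          · exact ⟨h1, h2, h3⟩
          · exact ⟨h1, h2, by omega⟩)
    (by rintro P ⟨_, _, _, h4⟩ ⟨_, _, h3'⟩; omega)
    (path_finite _ (fun P hp => hp.1))
  have s2 := card_split
    (fun P : Fin n → ℤ => IsPath P ∧ (∀ a ≤ n, -w ≤ ht P a) ∧ y + 1 ≤ ht P n)
    (fun P => IsPath P ∧ (∀ a ≤ n, -w ≤ ht P a) ∧ ht P n = y + 1)
    (fun P => IsPath P ∧ (∀ a ≤ n, -w ≤ ht P a) ∧ y + 2 ≤ ht P n)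
    (by intro P; constructor
        · rintro ⟨h1, h2, h3⟩
          rcases eq_or_lt_of_le h3 with h | h
          · exact Or.inl ⟨h1, h2, h.symm⟩
          · exact Or.inr ⟨h1, h2, by omega⟩
        · rintro (⟨h1, h2, h3⟩ | ⟨h1, h2, h3⟩) <;> exact ⟨h1, h2, by omega⟩)
    (by rintro P ⟨_, _, h3⟩ ⟨_, _, h3'⟩; omega)
    (path_finite _ (fun P hp => hp.1))
  have hz : Nat.card {P : Fin n → ℤ // IsPath P ∧ (∀ a ≤ n, -w ≤ ht P a) ∧ ht P n = y + 1}
      = 0 :=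
    card_zero_end _ (fun P hp => ⟨hp.1, hp.2.2⟩) (Or.inr (by omega))
  unfold gE hE
  rw [s1, s2, hz]
  omega

theorem refl1D' (w x : ℤ) (hw : 0 ≤ w) (hx : -w-1 ≤ x) :
    wE n w x + fE n (x + (2*w+2)) = fE n x := refl1D w x hw hx

theorem gE0_closed : ∀ k : ℕ, ∀ x : ℤ, (n:ℤ) ≤ x + 2*k → (x + n) % 2 = 0 → -1 ≤ x →
    gE n 0 x = fE n x := by
  intro k
  induction k with
  | zero =>
    intro x hk hpar hx
    have h1 := gE_split (n := n) 0 x hpar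
    have h2 : gE n 0 (x+2) = 0 := gE_big (by omega)
    have h3 := refl1D' (n := n) 0 x (le_refl 0) (by omega)
    have h4 : fE n (x+2) = 0 := fE_big (by omega)
    have h5 : x + (2*0+2) = x + 2 := by ring
    rw [h5] at h3
    omega
  | succ k ih =>
    intro x hk hpar hx
    have h1 := gE_split (n := n) 0 x hpar
    have h2 : gE n 0 (x+2) = fE n (x+2) := ih (x+2) (by push_cast at hk ⊢; omega) (by omega) (by omega)
    have h3 := refl1D' (n := n) 0 x (le_refl 0) (by omega)
    have h5 : x + (2*0+2) = x + 2 := by ring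
    rw [h5] at h3
    omega

theorem gE2_closed : ∀ k : ℕ, ∀ x : ℤ, (n:ℤ) ≤ x + 2*k → (x + n) % 2 = 0 → -3 ≤ x →
    gE n 2 x = fE n x + fE n (x+2) + fE n (x+4) := by
  intro k
  induction k with
  | zero =>
    intro x hk hpar hx
    have h1 := gE_split (n := n) 2 x hpar
    have h2 : gE n 2 (x+2) = 0 := gE_big (by omega)
    have h3 := refl1D' (n := n) 2 x (by norm_num) (by omega)
    have h5 : x + (2*2+2) = x + 6 := by ring
    rw [h5] at h3
    have h4 : fE n (x+2) = 0 := fE_big (by omega)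
    have h6 : fE n (x+4) = 0 := fE_big (by omega)
    have h7 : fE n (x+6) = 0 := fE_big (by omega)
    omega
  | succ k ih =>
    intro x hk hpar hx
    have h1 := gE_split (n := n) 2 x hpar
    have h2 : gE n 2 (x+2) = fE n (x+2) + fE n (x+4) + fE n (x+6) := by
      have := ih (x+2) (by push_cast at hk ⊢; omega) (by omega) (by omega)
      convert this using 3 <;> ring
    have h3 := refl1D' (n := n) 2 x (by norm_num) (by omega)
    have h5 : x + (2*2+2) = x + 6 := by ring
    rw [h5] at h3
    omega

end count1
section twod
variable {n : ℕ}

theorem diff_parity {P Q : Fin n → ℤ} (hP : IsPath P) (hQ : IsPath Q) {a : ℕ} (ha : a ≤ n) :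
    (ht Q a - ht P a) % 2 = 0 := by
  have h1 := ht_parity hP a ha
  have h2 := ht_parity hQ a ha
  omega

theorem sum_parity {P Q : Fin n → ℤ} (hP : IsPath P) (hQ : IsPath Q) {a : ℕ} (ha : a ≤ n) :
    (ht P a + ht Q a) % 2 = 0 := by
  have h1 := ht_parity hP a ha
  have h2 := ht_parity hQ a ha
  omega

theorem step_bound {P : Fin n → ℤ} (hP : IsPath P) (a : ℕ) :
    ht P a - 1 ≤ ht P (a+1) ∧ ht P (a+1) ≤ ht P a + 1 := by
  by_cases h : a < n
  · rcases ht_step hP h with h' | h' <;> omega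
  · push_neg at h
    rw [ht_stable P (by omega : n ≤ a + 1), ht_stable P h]
    omega

theorem touch_of_ge {P Q : Fin n → ℤ} (hP : IsPath P) (hQ : IsPath Q)
    (h : ∃ a, a ≤ n ∧ ht P a + 2 ≤ ht Q a) : ∃ a, a ≤ n ∧ ht Q a = ht P a + 2 := by
  obtain ⟨t, htn, hmin, h1, h2⟩ := first_hit (g := fun a => -(ht Q a - ht P a)) (v := -2)
    (c := 2) (N := n) (by norm_num)
    (by simp [ht_zero])
    (by
      intro a
      have b1 := step_bound hP a
      have b2 := step_bound hQ a
      show -(ht Q a - ht P a) - 2 ≤ -(ht Q (a+1) - ht P (a+1))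
      omega)
    (by
      obtain ⟨a, ha, hle⟩ := h
      refine ⟨a, ha, show -(ht Q a - ht P a) ≤ -2 from by omega⟩)
  have h1' : -(ht Q t - ht P t) ≤ -2 := h1
  have h2' : -2 + 1 - 2 ≤ -(ht Q t - ht P t) := h2
  have hpar := diff_parity hP hQ htn
  exact ⟨t, htn, by omega⟩


theorem below_iff_not_touch {P Q : Fin n → ℤ} (hP : IsPath P) (hQ : IsPath Q) :
    (∀ a ≤ n, ht Q a ≤ ht P a) ↔ ¬ (∃ a, a ≤ n ∧ ht Q a = ht P a + 2) := by
  constructor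
  · rintro hb ⟨a, ha, heq⟩
    have := hb a ha
    omega
  · intro hnt a ha
    by_contra hlt
    push_neg at hlt
    have hpar := diff_parity hP hQ ha
    exact hnt (touch_of_ge hP hQ ⟨a, ha, by omega⟩)

noncomputable def smap (x : (Fin n → ℤ) × (Fin n → ℤ)) : (Fin n → ℤ) × (Fin n → ℤ) :=
  if h : ∃ a, a ≤ n ∧ ht x.1 a + 2 ≤ ht x.2 a then
    (tail2 (Nat.find h) x.1 x.2, tail2 (Nat.find h) x.2 x.1) else x

theorem smap_spec {x : (Fin n → ℤ) × (Fin n → ℤ)} (hP : IsPath x.1) (hQ : IsPath x.2)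
    (h : ∃ a, a ≤ n ∧ ht x.1 a + 2 ≤ ht x.2 a) :
    Nat.find h ≤ n ∧ ht x.2 (Nat.find h) = ht x.1 (Nat.find h) + 2 ∧
      ∀ a < Nat.find h, ht x.2 a < ht x.1 a + 2 := by
  obtain ⟨hn, hge⟩ := Nat.find_spec h
  have hmin : ∀ a < Nat.find h, ht x.2 a < ht x.1 a + 2 := by
    intro a ha
    have h1 := Nat.find_min h ha
    push_neg at h1
    have := h1 (by omega)
    omega
  refine ⟨hn, ?_, hmin⟩
  rcases Nat.eq_zero_or_pos (Nat.find h) with h0 | h0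
  · rw [h0] at hge
    rw [ht_zero, ht_zero] at hge
    omega
  · obtain ⟨t', ht'⟩ : ∃ t', Nat.find h = t' + 1 := ⟨Nat.find h - 1, by omega⟩
    have h1 := hmin t' (by omega)
    have b1 := step_bound hP t'
    have b2 := step_bound hQ t'
    have hpar := diff_parity hP hQ hn
    rw [ht'] at hge hpar ⊢
    omega

theorem smap_props {x : (Fin n → ℤ) × (Fin n → ℤ)} (hP : IsPath x.1) (hQ : IsPath x.2)
    (h : ∃ a, a ≤ n ∧ ht x.1 a + 2 ≤ ht x.2 a) :
    IsPath (smap x).1 ∧ IsPath (smap x).2 ∧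
    (∀ a, a ≤ n → Nat.find h ≤ a →
      ht (smap x).1 a = ht x.2 a - 2 ∧ ht (smap x).2 a = ht x.1 a + 2) ∧
    (∀ a, a ≤ Nat.find h →
      ht (smap x).1 a = ht x.1 a ∧ ht (smap x).2 a = ht x.2 a) ∧
    (∃ a, a ≤ n ∧ ht (smap x).1 a + 2 ≤ ht (smap x).2 a) ∧
    smap (smap x) = x := by
  obtain ⟨hTn, hTeq, hTmin⟩ := smap_spec hP hQ h
  have hdef : smap x = (tail2 (Nat.find h) x.1 x.2, tail2 (Nat.find h) x.2 x.1) := dif_pos h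
  have hge : ∀ a, a ≤ n → Nat.find h ≤ a →
      ht (smap x).1 a = ht x.2 a - 2 ∧ ht (smap x).2 a = ht x.1 a + 2 := by
    intro a han hTa
    rw [hdef]
    constructor
    · show ht (tail2 (Nat.find h) x.1 x.2) a = _
      rw [ht_tail2_ge _ _ hTa han, hTeq]
      ring
    · show ht (tail2 (Nat.find h) x.2 x.1) a = _
      rw [ht_tail2_ge _ _ hTa han, hTeq]
      ring
  have hle : ∀ a, a ≤ Nat.find h →
      ht (smap x).1 a = ht x.1 a ∧ ht (smap x).2 a = ht x.2 a := by
    intro a ha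
    rw [hdef]
    exact ⟨ht_tail2_le _ _ ha, ht_tail2_le _ _ ha⟩
  have hex : ∃ a, a ≤ n ∧ ht (smap x).1 a + 2 ≤ ht (smap x).2 a := by
    refine ⟨Nat.find h, hTn, ?_⟩
    rw [(hge _ hTn (le_refl _)).1, (hge _ hTn (le_refl _)).2, hTeq]
    omega
  refine ⟨by rw [hdef]; exact isPath_tail2 hP hQ _, by rw [hdef]; exact isPath_tail2 hQ hP _,
    hge, hle, hex, ?_⟩
  have hfind : Nat.find hex = Nat.find h := by
    apply le_antisymm
    · apply Nat.find_min' hex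
      refine ⟨hTn, ?_⟩
      rw [(hge _ hTn (le_refl _)).1, (hge _ hTn (le_refl _)).2, hTeq]
      omega
    · by_contra hc
      push_neg at hc
      obtain ⟨hn', hge'⟩ := Nat.find_spec hex
      rw [(hle _ (le_of_lt hc)).1, (hle _ (le_of_lt hc)).2] at hge'
      have := hTmin _ hc
      omega
  have hdef2 : smap (smap x) =
      (tail2 (Nat.find hex) (smap x).1 (smap x).2, tail2 (Nat.find hex) (smap x).2 (smap x).1) :=
    dif_pos hex
  rw [hdef2, hfind]
  rw [hdef]
  refine Prod.ext ?_ ?_ <;>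
  · funext l
    unfold tail2
    by_cases hl : (l : ℕ) < Nat.find h
    · simp only [if_pos hl]
    · simp only [if_neg hl, neg_neg]

noncomputable def cmap (μ : ℤ) (x : (Fin n → ℤ) × (Fin n → ℤ)) : (Fin n → ℤ) × (Fin n → ℤ) :=
  if h : ∃ a, a ≤ n ∧ ht x.1 a + ht x.2 a ≤ -2*μ then
    (tail2 (Nat.find h) x.1 (fun l => -x.2 l), tail2 (Nat.find h) x.2 (fun l => -x.1 l)) else x

theorem cmap_spec {μ : ℤ} (hμ : 0 ≤ μ) {x : (Fin n → ℤ) × (Fin n → ℤ)}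
    (hP : IsPath x.1) (hQ : IsPath x.2)
    (h : ∃ a, a ≤ n ∧ ht x.1 a + ht x.2 a ≤ -2*μ) :
    Nat.find h ≤ n ∧ ht x.1 (Nat.find h) + ht x.2 (Nat.find h) = -2*μ ∧
      ∀ a < Nat.find h, -2*μ < ht x.1 a + ht x.2 a := by
  obtain ⟨hn, hge⟩ := Nat.find_spec h
  have hmin : ∀ a < Nat.find h, -2*μ < ht x.1 a + ht x.2 a := by
    intro a ha
    have h1 := Nat.find_min h ha
    push_neg at h1
    have := h1 (by omega)
    omega
  refine ⟨hn, ?_, hmin⟩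
  rcases Nat.eq_zero_or_pos (Nat.find h) with h0 | h0
  · rw [h0] at hge ⊢
    rw [ht_zero, ht_zero] at hge ⊢
    omega
  · obtain ⟨t', ht'⟩ : ∃ t', Nat.find h = t' + 1 := ⟨Nat.find h - 1, by omega⟩
    have h1 := hmin t' (by omega)
    have b1 := step_bound hP t'
    have b2 := step_bound hQ t'
    have hpar := sum_parity hP hQ hn
    rw [ht'] at hge hpar ⊢
    omega

theorem cmap_props {μ : ℤ} (hμ : 0 ≤ μ) {x : (Fin n → ℤ) × (Fin n → ℤ)}
    (hP : IsPath x.1) (hQ : IsPath x.2)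
    (h : ∃ a, a ≤ n ∧ ht x.1 a + ht x.2 a ≤ -2*μ) :
    IsPath (cmap μ x).1 ∧ IsPath (cmap μ x).2 ∧
    (∀ a, a ≤ n → Nat.find h ≤ a →
      ht (cmap μ x).1 a = -2*μ - ht x.2 a ∧ ht (cmap μ x).2 a = -2*μ - ht x.1 a) ∧
    (∀ a, a ≤ Nat.find h →
      ht (cmap μ x).1 a = ht x.1 a ∧ ht (cmap μ x).2 a = ht x.2 a) ∧
    (∃ a, a ≤ n ∧ ht (cmap μ x).1 a + ht (cmap μ x).2 a ≤ -2*μ) ∧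
    cmap μ (cmap μ x) = x := by
  obtain ⟨hTn, hTeq, hTmin⟩ := cmap_spec hμ hP hQ h
  have hdef : cmap μ x =
      (tail2 (Nat.find h) x.1 (fun l => -x.2 l), tail2 (Nat.find h) x.2 (fun l => -x.1 l)) :=
    dif_pos h
  have hge : ∀ a, a ≤ n → Nat.find h ≤ a →
      ht (cmap μ x).1 a = -2*μ - ht x.2 a ∧ ht (cmap μ x).2 a = -2*μ - ht x.1 a := by
    intro a han hTa
    rw [hdef]
    constructor
    · show ht (tail2 (Nat.find h) x.1 (fun l => -x.2 l)) a = _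
      rw [ht_tail2_ge _ _ hTa han, ht_neg, ht_neg]
      omega
    · show ht (tail2 (Nat.find h) x.2 (fun l => -x.1 l)) a = _
      rw [ht_tail2_ge _ _ hTa han, ht_neg, ht_neg]
      omega
  have hle : ∀ a, a ≤ Nat.find h →
      ht (cmap μ x).1 a = ht x.1 a ∧ ht (cmap μ x).2 a = ht x.2 a := by
    intro a ha
    rw [hdef]
    exact ⟨ht_tail2_le _ _ ha, ht_tail2_le _ _ ha⟩
  have hex : ∃ a, a ≤ n ∧ ht (cmap μ x).1 a + ht (cmap μ x).2 a ≤ -2*μ := by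
    refine ⟨Nat.find h, hTn, ?_⟩
    rw [(hge _ hTn (le_refl _)).1, (hge _ hTn (le_refl _)).2]
    omega
  refine ⟨by rw [hdef]; exact isPath_tail2 hP (isPath_neg hQ) _,
    by rw [hdef]; exact isPath_tail2 hQ (isPath_neg hP) _, hge, hle, hex, ?_⟩
  have hfind : Nat.find hex = Nat.find h := by
    apply le_antisymm
    · apply Nat.find_min' hex
      refine ⟨hTn, ?_⟩
      rw [(hge _ hTn (le_refl _)).1, (hge _ hTn (le_refl _)).2]
      omega
    · by_contra hc
      push_neg at hc
      obtain ⟨hn', hge'⟩ := Nat.find_spec hex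
      rw [(hle _ (le_of_lt hc)).1, (hle _ (le_of_lt hc)).2] at hge'
      have := hTmin _ hc
      omega
  have hdef2 : cmap μ (cmap μ x) =
      (tail2 (Nat.find hex) (cmap μ x).1 (fun l => -(cmap μ x).2 l),
       tail2 (Nat.find hex) (cmap μ x).2 (fun l => -(cmap μ x).1 l)) :=
    dif_pos hex
  rw [hdef2, hfind]
  rw [hdef]
  refine Prod.ext ?_ ?_ <;>
  · funext l
    unfold tail2
    by_cases hl : (l : ℕ) < Nat.find h
    · simp only [if_pos hl]
    · simp only [if_neg hl, neg_neg]

end twod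
section lgv
variable {n : ℕ}

theorem below_iff {P Q : Fin n → ℤ} (hP : IsPath P) (hQ : IsPath Q) :
    (∀ a ≤ n, ht Q a ≤ ht P a) ↔ ¬ (∃ a, a ≤ n ∧ ht P a + 2 ≤ ht Q a) := by
  constructor
  · rintro hb ⟨a, ha, hle⟩
    have := hb a ha
    omega
  · intro hnt a ha
    by_contra hlt
    push_neg at hlt
    have hpar := diff_parity hP hQ ha
    exact hnt ⟨a, ha, by omega⟩

theorem smap_transfer (wq : ℤ) {x : (Fin n → ℤ) × (Fin n → ℤ)}
    (h1 : IsPath x.1) (h2 : IsPath x.2)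
    (hwQ : ∀ a ≤ n, wq ≤ ht x.2 a) (hwP : ∀ a ≤ n, wq - 2 ≤ ht x.1 a)
    (hex : ∃ a, a ≤ n ∧ ht x.1 a + 2 ≤ ht x.2 a) :
    IsPath (smap x).1 ∧ IsPath (smap x).2 ∧
    (∀ a ≤ n, wq ≤ ht (smap x).2 a) ∧ (∀ a ≤ n, wq - 2 ≤ ht (smap x).1 a) ∧
    ht (smap x).1 n = ht x.2 n - 2 ∧ ht (smap x).2 n = ht x.1 n + 2 ∧
    (∃ a, a ≤ n ∧ ht (smap x).1 a + 2 ≤ ht (smap x).2 a) ∧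
    smap (smap x) = x := by
  obtain ⟨p1, p2, hge, hle, hex', hinv⟩ := smap_props h1 h2 hex
  have hTn := (smap_spec h1 h2 hex).1
  refine ⟨p1, p2, ?_, ?_, (hge n (le_refl n) hTn).1, (hge n (le_refl n) hTn).2, hex', hinv⟩
  · intro a ha
    rcases le_total a (Nat.find hex) with h | h
    · rw [(hle a h).2]
      exact hwQ a ha
    · rw [(hge a ha h).2]
      have := hwP a ha
      omega
  · intro a ha
    rcases le_total a (Nat.find hex) with h | h
    · rw [(hle a h).1]
      exact hwP a ha
    · rw [(hge a ha h).1]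
      have := hwQ a ha
      omega

theorem lgv_master (wq : ℤ) (epP epQ : ℤ → Prop) :
    Nat.card {x : (Fin n → ℤ) × (Fin n → ℤ) //
      IsPath x.1 ∧ IsPath x.2 ∧ (∀ a ≤ n, wq ≤ ht x.2 a) ∧ (∀ a ≤ n, wq - 2 ≤ ht x.1 a) ∧
      epP (ht x.1 n) ∧ epQ (ht x.2 n) ∧ (∃ a, a ≤ n ∧ ht x.1 a + 2 ≤ ht x.2 a)} =
    Nat.card {x : (Fin n → ℤ) × (Fin n → ℤ) //
      IsPath x.1 ∧ IsPath x.2 ∧ (∀ a ≤ n, wq ≤ ht x.2 a) ∧ (∀ a ≤ n, wq - 2 ≤ ht x.1 a) ∧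
      epQ (ht x.1 n + 2) ∧ epP (ht x.2 n - 2) ∧ (∃ a, a ≤ n ∧ ht x.1 a + 2 ≤ ht x.2 a)} := by
  apply Nat.card_congr
  refine
    { toFun := fun y => ⟨smap y.val, ?_⟩
      invFun := fun y => ⟨smap y.val, ?_⟩
      left_inv := ?_, right_inv := ?_ }
  · obtain ⟨h1, h2, hwQ, hwP, heP, heQ, hex⟩ := y.2
    obtain ⟨p1, p2, q1, q2, e1, e2, hex', _⟩ := smap_transfer wq h1 h2 hwQ hwP hex
    refine ⟨p1, p2, q1, q2, ?_, ?_, hex'⟩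
    · rw [e1]
      have : ht y.val.2 n - 2 + 2 = ht y.val.2 n := by ring
      rw [this]
      exact heQ
    · rw [e2]
      have : ht y.val.1 n + 2 - 2 = ht y.val.1 n := by ring
      rw [this]
      exact heP
  · obtain ⟨h1, h2, hwQ, hwP, heP, heQ, hex⟩ := y.2
    obtain ⟨p1, p2, q1, q2, e1, e2, hex', _⟩ := smap_transfer wq h1 h2 hwQ hwP hex
    refine ⟨p1, p2, q1, q2, ?_, ?_, hex'⟩
    · rw [e1]
      exact heQ
    · rw [e2]
      exact heP
  · rintro ⟨x, h1, h2, hwQ, hwP, _, _, hex⟩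
    simp only [Subtype.mk.injEq]
    exact (smap_transfer wq h1 h2 hwQ hwP hex).2.2.2.2.2.2.2
  · rintro ⟨x, h1, h2, hwQ, hwP, _, _, hex⟩
    simp only [Subtype.mk.injEq]
    exact (smap_transfer wq h1 h2 hwQ hwP hex).2.2.2.2.2.2.2

end lgv
section bside
variable {n : ℕ}

theorem cmap_transfer (μ : ℤ) (hμ : 0 ≤ μ) {x : (Fin n → ℤ) × (Fin n → ℤ)}
    (h1 : IsPath x.1) (h2 : IsPath x.2) (hb : ∀ a ≤ n, ht x.2 a ≤ ht x.1 a)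
    (hex : ∃ a, a ≤ n ∧ ht x.1 a + ht x.2 a ≤ -2*μ) :
    IsPath (cmap μ x).1 ∧ IsPath (cmap μ x).2 ∧
    (∀ a ≤ n, ht (cmap μ x).2 a ≤ ht (cmap μ x).1 a) ∧
    ht (cmap μ x).1 n = -2*μ - ht x.2 n ∧ ht (cmap μ x).2 n = -2*μ - ht x.1 n ∧
    (∃ a, a ≤ n ∧ ht (cmap μ x).1 a + ht (cmap μ x).2 a ≤ -2*μ) ∧
    cmap μ (cmap μ x) = x := by
  obtain ⟨p1, p2, hge, hle, hex', hinv⟩ := cmap_props hμ h1 h2 hex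
  have hTn := (cmap_spec hμ h1 h2 hex).1
  refine ⟨p1, p2, ?_, (hge n (le_refl n) hTn).1, (hge n (le_refl n) hTn).2, hex', hinv⟩
  intro a ha
  rcases le_total a (Nat.find hex) with h | h
  · rw [(hle a h).1, (hle a h).2]
    exact hb a ha
  · rw [(hge a ha h).1, (hge a ha h).2]
    have := hb a ha
    omega

theorem cross_refl (μ : ℤ) (hμ : 0 ≤ μ) (u v : ℤ) :
    Nat.card {x : (Fin n → ℤ) × (Fin n → ℤ) //
      IsPath x.1 ∧ IsPath x.2 ∧ (∀ a ≤ n, ht x.2 a ≤ ht x.1 a) ∧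
      ht x.1 n = u ∧ ht x.2 n = v ∧ (∃ a, a ≤ n ∧ ht x.1 a + ht x.2 a ≤ -2*μ)} =
    Nat.card {x : (Fin n → ℤ) × (Fin n → ℤ) //
      IsPath x.1 ∧ IsPath x.2 ∧ (∀ a ≤ n, ht x.2 a ≤ ht x.1 a) ∧
      ht x.1 n = -2*μ - v ∧ ht x.2 n = -2*μ - u ∧
      (∃ a, a ≤ n ∧ ht x.1 a + ht x.2 a ≤ -2*μ)} := by
  apply Nat.card_congr
  refine
    { toFun := fun y => ⟨cmap μ y.val, ?_⟩
      invFun := fun y => ⟨cmap μ y.val, ?_⟩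
      left_inv := ?_, right_inv := ?_ }
  · obtain ⟨h1, h2, hb, e1, e2, hex⟩ := y.2
    obtain ⟨p1, p2, hb', f1, f2, hex', _⟩ := cmap_transfer μ hμ h1 h2 hb hex
    exact ⟨p1, p2, hb', by rw [f1, e2], by rw [f2, e1], hex'⟩
  · obtain ⟨h1, h2, hb, e1, e2, hex⟩ := y.2
    obtain ⟨p1, p2, hb', f1, f2, hex', _⟩ := cmap_transfer μ hμ h1 h2 hb hex
    refine ⟨p1, p2, hb', by rw [f1, e2]; ring, by rw [f2, e1]; ring, hex'⟩
  · rintro ⟨x, h1, h2, hb, _, _, hex⟩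
    simp only [Subtype.mk.injEq]
    exact (cmap_transfer μ hμ h1 h2 hb hex).2.2.2.2.2.2
  · rintro ⟨x, h1, h2, hb, _, _, hex⟩
    simp only [Subtype.mk.injEq]
    exact (cmap_transfer μ hμ h1 h2 hb hex).2.2.2.2.2.2

theorem flip_pair (u v : ℤ) :
    Nat.card {x : (Fin n → ℤ) × (Fin n → ℤ) //
      IsPath x.1 ∧ IsPath x.2 ∧ (∀ a ≤ n, ht x.2 a ≤ ht x.1 a) ∧
      ht x.1 n = u ∧ ht x.2 n = v} =
    Nat.card {x : (Fin n → ℤ) × (Fin n → ℤ) //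
      IsPath x.1 ∧ IsPath x.2 ∧ (∀ a ≤ n, ht x.2 a ≤ ht x.1 a) ∧
      ht x.1 n = -v ∧ ht x.2 n = -u} := by
  apply Nat.card_congr
  refine
    { toFun := fun y => ⟨(fun l => -y.val.2 l, fun l => -y.val.1 l), ?_⟩
      invFun := fun y => ⟨(fun l => -y.val.2 l, fun l => -y.val.1 l), ?_⟩
      left_inv := ?_, right_inv := ?_ }
  · obtain ⟨h1, h2, hb, e1, e2⟩ := y.2
    refine ⟨isPath_neg h2, isPath_neg h1, ?_, by rw [ht_neg, e2], by rw [ht_neg, e1]⟩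
    intro a ha
    rw [ht_neg, ht_neg]
    have := hb a ha
    omega
  · obtain ⟨h1, h2, hb, e1, e2⟩ := y.2
    refine ⟨isPath_neg h2, isPath_neg h1, ?_, by rw [ht_neg, e2]; ring,
      by rw [ht_neg, e1]; ring⟩
    intro a ha
    rw [ht_neg, ht_neg]
    have := hb a ha
    omega
  · rintro ⟨⟨P, Q⟩, hx⟩
    simp
  · rintro ⟨⟨P, Q⟩, hx⟩
    simp

theorem agreeMin_le_iff {P Q : Fin n → ℤ} (hP : IsPath P) (hQ : IsPath Q) (μ : ℤ) :
    agreeMin P Q ≤ -μ ↔ ∃ a, a ≤ n ∧ ht P a + ht Q a ≤ -2*μ := by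
  unfold agreeMin
  rw [Finset.inf'_le_iff]
  constructor
  · rintro ⟨a, ha, hle⟩
    rw [Finset.mem_range] at ha
    have hpar := sum_parity hP hQ (by omega : a ≤ n)
    exact ⟨a, by omega, by omega⟩
  · rintro ⟨a, ha, hle⟩
    refine ⟨a, Finset.mem_range.mpr (by omega), ?_⟩
    have hpar := sum_parity hP hQ ha
    omega

end bside
section final
variable {n : ℕ}

theorem walls_triv {x : (Fin n → ℤ) × (Fin n → ℤ)} (h1 : IsPath x.1) (h2 : IsPath x.2) :
    (∀ a ≤ n, -(n:ℤ) ≤ ht x.2 a) ∧ (∀ a ≤ n, -(n:ℤ) - 2 ≤ ht x.1 a) := by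
  constructor <;> intro a ha
  · have := (ht_bound h2 a ha).1; omega
  · have := (ht_bound h1 a ha).1; omega

/-- LGV with trivial walls: `cB u v + fE (v-2) * fE (u+2) = fE u * fE v`. -/
theorem cB_eq (u v : ℤ) (huv : v ≤ u + 2) :
    Nat.card {x : (Fin n → ℤ) × (Fin n → ℤ) //
      IsPath x.1 ∧ IsPath x.2 ∧ (∀ a ≤ n, ht x.2 a ≤ ht x.1 a) ∧
      ht x.1 n = u ∧ ht x.2 n = v} + fE n (v-2) * fE n (u+2) = fE n u * fE n v := by
  have hsplit := card_split
    (fun x : (Fin n → ℤ) × (Fin n → ℤ) =>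
      IsPath x.1 ∧ IsPath x.2 ∧ (∀ a ≤ n, -(n:ℤ) ≤ ht x.2 a) ∧
      (∀ a ≤ n, -(n:ℤ) - 2 ≤ ht x.1 a) ∧ ht x.1 n = u ∧ ht x.2 n = v)
    (fun x => IsPath x.1 ∧ IsPath x.2 ∧ (∀ a ≤ n, ht x.2 a ≤ ht x.1 a) ∧
      ht x.1 n = u ∧ ht x.2 n = v)
    (fun x => IsPath x.1 ∧ IsPath x.2 ∧ (∀ a ≤ n, -(n:ℤ) ≤ ht x.2 a) ∧
      (∀ a ≤ n, -(n:ℤ) - 2 ≤ ht x.1 a) ∧ ht x.1 n = u ∧ ht x.2 n = v ∧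
      (∃ a, a ≤ n ∧ ht x.1 a + 2 ≤ ht x.2 a))
    (by
      intro x
      constructor
      · rintro ⟨h1, h2, hwq, hwp, e1, e2⟩
        by_cases hnb : ∃ a, a ≤ n ∧ ht x.1 a + 2 ≤ ht x.2 a
        · exact Or.inr ⟨h1, h2, hwq, hwp, e1, e2, hnb⟩
        · exact Or.inl ⟨h1, h2, (below_iff h1 h2).mpr hnb, e1, e2⟩
      · rintro (⟨h1, h2, hb, e1, e2⟩ | ⟨h1, h2, hwq, hwp, e1, e2, _⟩)
        · exact ⟨h1, h2, (walls_triv h1 h2).1, (walls_triv h1 h2).2, e1, e2⟩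
        · exact ⟨h1, h2, hwq, hwp, e1, e2⟩)
    (by
      rintro x ⟨h1, h2, hb, _, _⟩ ⟨_, _, _, _, _, _, hnb⟩
      exact ((below_iff h1 h2).mp hb) hnb)
    (pair_finite _ (fun x hx => ⟨hx.1, hx.2.1⟩))
  have hfull : Nat.card {x : (Fin n → ℤ) × (Fin n → ℤ) //
      IsPath x.1 ∧ IsPath x.2 ∧ (∀ a ≤ n, -(n:ℤ) ≤ ht x.2 a) ∧
      (∀ a ≤ n, -(n:ℤ) - 2 ≤ ht x.1 a) ∧ ht x.1 n = u ∧ ht x.2 n = v}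
      = fE n u * fE n v := by
    rw [card_prop_congr (q := fun x : (Fin n → ℤ) × (Fin n → ℤ) =>
      (IsPath x.1 ∧ ht x.1 n = u) ∧ (IsPath x.2 ∧ ht x.2 n = v))
      (fun x => by
        constructor
        · rintro ⟨h1, h2, _, _, e1, e2⟩
          exact ⟨⟨h1, e1⟩, h2, e2⟩
        · rintro ⟨⟨h1, e1⟩, h2, e2⟩
          exact ⟨h1, h2, (walls_triv h1 h2).1, (walls_triv h1 h2).2, e1, e2⟩)]
    unfold fE
    exact card_pair_prod (fun P => IsPath P ∧ ht P n = u) (fun Q => IsPath Q ∧ ht Q n = v)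
  have hlgv := lgv_master (wq := -(n:ℤ)) (fun z => z = u) (fun z => z = v) (n := n)
  have htouch : Nat.card {x : (Fin n → ℤ) × (Fin n → ℤ) //
      IsPath x.1 ∧ IsPath x.2 ∧ (∀ a ≤ n, -(n:ℤ) ≤ ht x.2 a) ∧
      (∀ a ≤ n, -(n:ℤ) - 2 ≤ ht x.1 a) ∧ ht x.1 n = u ∧ ht x.2 n = v ∧
      (∃ a, a ≤ n ∧ ht x.1 a + 2 ≤ ht x.2 a)}
      = fE n (v-2) * fE n (u+2) := by
    have e1 : Nat.card {x : (Fin n → ℤ) × (Fin n → ℤ) //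
        IsPath x.1 ∧ IsPath x.2 ∧ (∀ a ≤ n, -(n:ℤ) ≤ ht x.2 a) ∧
        (∀ a ≤ n, -(n:ℤ) - 2 ≤ ht x.1 a) ∧ ht x.1 n = u ∧ ht x.2 n = v ∧
        (∃ a, a ≤ n ∧ ht x.1 a + 2 ≤ ht x.2 a)}
        = Nat.card {x : (Fin n → ℤ) × (Fin n → ℤ) //
        IsPath x.1 ∧ IsPath x.2 ∧ (∀ a ≤ n, -(n:ℤ) ≤ ht x.2 a) ∧
        (∀ a ≤ n, -(n:ℤ) - 2 ≤ ht x.1 a) ∧ (ht x.1 n = u) ∧ (ht x.2 n = v) ∧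
        (∃ a, a ≤ n ∧ ht x.1 a + 2 ≤ ht x.2 a)} := rfl
    rw [e1, hlgv]
    rw [card_prop_congr (q := fun x : (Fin n → ℤ) × (Fin n → ℤ) =>
      (IsPath x.1 ∧ ht x.1 n = v - 2) ∧ (IsPath x.2 ∧ ht x.2 n = u + 2))
      (fun x => by
        constructor
        · rintro ⟨h1, h2, _, _, e1, e2, _⟩
          exact ⟨⟨h1, by omega⟩, h2, by omega⟩
        · rintro ⟨⟨h1, e1⟩, h2, e2⟩
          refine ⟨h1, h2, (walls_triv h1 h2).1, (walls_triv h1 h2).2, by omega, by omega,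
            ⟨n, le_refl n, by omega⟩⟩)]
    unfold fE
    exact card_pair_prod (fun P => IsPath P ∧ ht P n = v - 2) (fun Q => IsPath Q ∧ ht Q n = u + 2)
  rw [hfull, htouch] at hsplit
  omega

/-- A-side: LHS count in terms of 1D counts. -/
theorem A_side (b t : ℤ) (i j : ℤ) (hb : b = i - j) (ht' : t = i + j) :
    Nat.card {x : (Fin n → ℤ) × (Fin n → ℤ) //
      IsPath x.1 ∧ IsPath x.2 ∧ (∀ a ≤ n, ht x.2 a ≤ ht x.1 a) ∧
      (∀ a ≤ n, 0 ≤ ht x.1 a) ∧ (∀ a ≤ n, 0 ≤ ht x.2 a) ∧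
      i - j ≤ ht x.2 n ∧ ht x.2 n ≤ i + j ∧ i + j ≤ ht x.1 n}
      + hE n 2 (b-2) (t-2) * gE n 0 (t+2)
      = gE n 2 t * hE n 0 b t := by
  have hsplit := card_split
    (fun x : (Fin n → ℤ) × (Fin n → ℤ) =>
      IsPath x.1 ∧ IsPath x.2 ∧ (∀ a ≤ n, (0:ℤ) ≤ ht x.2 a) ∧
      (∀ a ≤ n, (0:ℤ) - 2 ≤ ht x.1 a) ∧ (t ≤ ht x.1 n) ∧ (b ≤ ht x.2 n ∧ ht x.2 n ≤ t))
    (fun x => IsPath x.1 ∧ IsPath x.2 ∧ (∀ a ≤ n, ht x.2 a ≤ ht x.1 a) ∧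
      (∀ a ≤ n, 0 ≤ ht x.1 a) ∧ (∀ a ≤ n, 0 ≤ ht x.2 a) ∧
      i - j ≤ ht x.2 n ∧ ht x.2 n ≤ i + j ∧ i + j ≤ ht x.1 n)
    (fun x => IsPath x.1 ∧ IsPath x.2 ∧ (∀ a ≤ n, (0:ℤ) ≤ ht x.2 a) ∧
      (∀ a ≤ n, (0:ℤ) - 2 ≤ ht x.1 a) ∧ (t ≤ ht x.1 n) ∧ (b ≤ ht x.2 n ∧ ht x.2 n ≤ t) ∧
      (∃ a, a ≤ n ∧ ht x.1 a + 2 ≤ ht x.2 a))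
    (by
      intro x
      constructor
      · rintro ⟨h1, h2, hwq, hwp, e1, e2⟩
        by_cases hnb : ∃ a, a ≤ n ∧ ht x.1 a + 2 ≤ ht x.2 a
        · exact Or.inr ⟨h1, h2, hwq, hwp, e1, e2, hnb⟩
        · have hbel := (below_iff h1 h2).mpr hnb
          refine Or.inl ⟨h1, h2, hbel, ?_, hwq, by omega, by omega, by omega⟩
          intro a ha
          have := hbel a ha
          have := hwq a ha
          omega
      · rintro (⟨h1, h2, hbel, hp0, hq0, e1, e2, e3⟩ | ⟨h1, h2, hwq, hwp, e1, e2, _⟩)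
        · refine ⟨h1, h2, hq0, fun a ha => by have := hp0 a ha; omega,
            by omega, by omega, by omega⟩
        · exact ⟨h1, h2, hwq, hwp, e1, e2⟩)
    (by
      rintro x ⟨h1, h2, hb', _, _⟩ ⟨_, _, _, _, _, _, hnb⟩
      exact ((below_iff h1 h2).mp hb') hnb)
    (pair_finite _ (fun x hx => ⟨hx.1, hx.2.1⟩))
  have hfull : Nat.card {x : (Fin n → ℤ) × (Fin n → ℤ) //
      IsPath x.1 ∧ IsPath x.2 ∧ (∀ a ≤ n, (0:ℤ) ≤ ht x.2 a) ∧
      (∀ a ≤ n, (0:ℤ) - 2 ≤ ht x.1 a) ∧ (t ≤ ht x.1 n) ∧ (b ≤ ht x.2 n ∧ ht x.2 n ≤ t)}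
      = gE n 2 t * hE n 0 b t := by
    unfold gE hE
    rw [card_prop_congr (q := fun x : (Fin n → ℤ) × (Fin n → ℤ) =>
      (IsPath x.1 ∧ (∀ a ≤ n, -(2:ℤ) ≤ ht x.1 a) ∧ t ≤ ht x.1 n) ∧
      (IsPath x.2 ∧ (∀ a ≤ n, -(0:ℤ) ≤ ht x.2 a) ∧ b ≤ ht x.2 n ∧ ht x.2 n ≤ t))
      (fun x => by
        constructor
        · rintro ⟨h1, h2, hwq, hwp, e1, e2⟩
          exact ⟨⟨h1, fun a ha => by have := hwp a ha; omega, e1⟩,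
            h2, fun a ha => by have := hwq a ha; omega, e2⟩
        · rintro ⟨⟨h1, hwp, e1⟩, h2, hwq, e2⟩
          exact ⟨h1, h2, fun a ha => by have := hwq a ha; omega,
            fun a ha => by have := hwp a ha; omega, e1, e2⟩)]
    exact card_pair_prod (fun P => IsPath P ∧ (∀ a ≤ n, -(2:ℤ) ≤ ht P a) ∧ t ≤ ht P n)
      (fun Q => IsPath Q ∧ (∀ a ≤ n, -(0:ℤ) ≤ ht Q a) ∧ b ≤ ht Q n ∧ ht Q n ≤ t)
  have hlgv := lgv_master (wq := (0:ℤ)) (fun z => t ≤ z) (fun z => b ≤ z ∧ z ≤ t) (n := n)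
  have htouch : Nat.card {x : (Fin n → ℤ) × (Fin n → ℤ) //
      IsPath x.1 ∧ IsPath x.2 ∧ (∀ a ≤ n, (0:ℤ) ≤ ht x.2 a) ∧
      (∀ a ≤ n, (0:ℤ) - 2 ≤ ht x.1 a) ∧ (t ≤ ht x.1 n) ∧ (b ≤ ht x.2 n ∧ ht x.2 n ≤ t) ∧
      (∃ a, a ≤ n ∧ ht x.1 a + 2 ≤ ht x.2 a)}
      = hE n 2 (b-2) (t-2) * gE n 0 (t+2) := by
    rw [hlgv]
    unfold gE hE
    rw [card_prop_congr (q := fun x : (Fin n → ℤ) × (Fin n → ℤ) =>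
      (IsPath x.1 ∧ (∀ a ≤ n, -(2:ℤ) ≤ ht x.1 a) ∧ b - 2 ≤ ht x.1 n ∧ ht x.1 n ≤ t - 2) ∧
      (IsPath x.2 ∧ (∀ a ≤ n, -(0:ℤ) ≤ ht x.2 a) ∧ t + 2 ≤ ht x.2 n))
      (fun x => by
        constructor
        · rintro ⟨h1, h2, hwq, hwp, ⟨e1a, e1b⟩, e2, _⟩
          exact ⟨⟨h1, fun a ha => by have := hwp a ha; omega, by omega, by omega⟩,
            h2, fun a ha => by have := hwq a ha; omega, by omega⟩
        · rintro ⟨⟨h1, hwp, e1a, e1b⟩, h2, hwq, e2⟩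
          refine ⟨h1, h2, fun a ha => by have := hwq a ha; omega,
            fun a ha => by have := hwp a ha; omega, ⟨by omega, by omega⟩, by omega,
            ⟨n, le_refl n, by omega⟩⟩)]
    exact card_pair_prod
      (fun P => IsPath P ∧ (∀ a ≤ n, -(2:ℤ) ≤ ht P a) ∧ b - 2 ≤ ht P n ∧ ht P n ≤ t - 2)
      (fun Q => IsPath Q ∧ (∀ a ≤ n, -(0:ℤ) ≤ ht Q a) ∧ t + 2 ≤ ht Q n)
  rw [hfull, htouch] at hsplit
  omega

end final
section bfinal
variable {n : ℕ}

theorem B_side (i j : ℤ) (hj : 0 ≤ j) (hij : j ≤ i) :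
    Nat.card {x : (Fin n → ℤ) × (Fin n → ℤ) //
      IsPath x.1 ∧ IsPath x.2 ∧ (∀ a ≤ n, ht x.2 a ≤ ht x.1 a) ∧
      ht x.1 n = j + i % 2 ∧ ht x.2 n = -j + i % 2 ∧ agreeMin x.1 x.2 = -(i / 2)}
    + Nat.card {x : (Fin n → ℤ) × (Fin n → ℤ) //
      IsPath x.1 ∧ IsPath x.2 ∧ (∀ a ≤ n, ht x.2 a ≤ ht x.1 a) ∧
      ht x.1 n = i + j + 2 ∧ ht x.2 n = i - j + 2}
    = Nat.card {x : (Fin n → ℤ) × (Fin n → ℤ) //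
      IsPath x.1 ∧ IsPath x.2 ∧ (∀ a ≤ n, ht x.2 a ≤ ht x.1 a) ∧
      ht x.1 n = i + j ∧ ht x.2 n = i - j} := by
  have hm : 0 ≤ i / 2 := Int.ediv_nonneg (by omega) (by norm_num)
  have hsplit := card_split
    (fun x : (Fin n → ℤ) × (Fin n → ℤ) =>
      IsPath x.1 ∧ IsPath x.2 ∧ (∀ a ≤ n, ht x.2 a ≤ ht x.1 a) ∧
      ht x.1 n = j + i % 2 ∧ ht x.2 n = -j + i % 2 ∧
      (∃ a, a ≤ n ∧ ht x.1 a + ht x.2 a ≤ -2*(i/2)))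
    (fun x => IsPath x.1 ∧ IsPath x.2 ∧ (∀ a ≤ n, ht x.2 a ≤ ht x.1 a) ∧
      ht x.1 n = j + i % 2 ∧ ht x.2 n = -j + i % 2 ∧ agreeMin x.1 x.2 = -(i / 2))
    (fun x => IsPath x.1 ∧ IsPath x.2 ∧ (∀ a ≤ n, ht x.2 a ≤ ht x.1 a) ∧
      ht x.1 n = j + i % 2 ∧ ht x.2 n = -j + i % 2 ∧
      (∃ a, a ≤ n ∧ ht x.1 a + ht x.2 a ≤ -2*(i/2 + 1)))
    (by
      intro x
      constructor
      · rintro ⟨h1, h2, hb, e1, e2, hex⟩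
        by_cases hex2 : ∃ a, a ≤ n ∧ ht x.1 a + ht x.2 a ≤ -2*(i/2 + 1)
        · exact Or.inr ⟨h1, h2, hb, e1, e2, hex2⟩
        · refine Or.inl ⟨h1, h2, hb, e1, e2, ?_⟩
          have u1 : agreeMin x.1 x.2 ≤ -(i/2) := (agreeMin_le_iff h1 h2 (i/2)).mpr hex
          have u2 : ¬ agreeMin x.1 x.2 ≤ -(i/2 + 1) :=
            fun hc => hex2 ((agreeMin_le_iff h1 h2 (i/2 + 1)).mp hc)
          omega
      · rintro (⟨h1, h2, hb, e1, e2, heq⟩ | ⟨h1, h2, hb, e1, e2, hex⟩)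
        · refine ⟨h1, h2, hb, e1, e2, (agreeMin_le_iff h1 h2 (i/2)).mp (by omega)⟩
        · refine ⟨h1, h2, hb, e1, e2, ?_⟩
          obtain ⟨a, ha, hle⟩ := hex
          exact ⟨a, ha, by omega⟩)
    (by
      rintro x ⟨h1, h2, _, _, _, heq⟩ ⟨_, _, _, _, _, hex⟩
      have := (agreeMin_le_iff h1 h2 (i/2 + 1)).mpr hex
      omega)
    (pair_finite _ (fun x hx => ⟨hx.1, hx.2.1⟩))
  have hcross1 : Nat.card {x : (Fin n → ℤ) × (Fin n → ℤ) //
      IsPath x.1 ∧ IsPath x.2 ∧ (∀ a ≤ n, ht x.2 a ≤ ht x.1 a) ∧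
      ht x.1 n = j + i % 2 ∧ ht x.2 n = -j + i % 2 ∧
      (∃ a, a ≤ n ∧ ht x.1 a + ht x.2 a ≤ -2*(i/2))}
      = Nat.card {x : (Fin n → ℤ) × (Fin n → ℤ) //
      IsPath x.1 ∧ IsPath x.2 ∧ (∀ a ≤ n, ht x.2 a ≤ ht x.1 a) ∧
      ht x.1 n = i + j ∧ ht x.2 n = i - j} := by
    rw [cross_refl (i/2) hm (j + i % 2) (-j + i % 2)]
    have hdrop : Nat.card {x : (Fin n → ℤ) × (Fin n → ℤ) //
        IsPath x.1 ∧ IsPath x.2 ∧ (∀ a ≤ n, ht x.2 a ≤ ht x.1 a) ∧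
        ht x.1 n = -2*(i/2) - (-j + i % 2) ∧ ht x.2 n = -2*(i/2) - (j + i % 2) ∧
        (∃ a, a ≤ n ∧ ht x.1 a + ht x.2 a ≤ -2*(i/2))}
        = Nat.card {x : (Fin n → ℤ) × (Fin n → ℤ) //
        IsPath x.1 ∧ IsPath x.2 ∧ (∀ a ≤ n, ht x.2 a ≤ ht x.1 a) ∧
        ht x.1 n = -(i - j) ∧ ht x.2 n = -(i + j)} := by
      apply card_prop_congr
      intro x
      constructor
      · rintro ⟨h1, h2, hb, e1, e2, _⟩
        exact ⟨h1, h2, hb, by omega, by omega⟩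
      · rintro ⟨h1, h2, hb, e1, e2⟩
        exact ⟨h1, h2, hb, by omega, by omega, ⟨n, le_refl n, by omega⟩⟩
    rw [hdrop, flip_pair (-(i-j)) (-(i+j))]
    apply card_prop_congr
    intro x
    constructor
    · rintro ⟨h1, h2, hb, e1, e2⟩
      exact ⟨h1, h2, hb, by omega, by omega⟩
    · rintro ⟨h1, h2, hb, e1, e2⟩
      exact ⟨h1, h2, hb, by omega, by omega⟩
  have hcross2 : Nat.card {x : (Fin n → ℤ) × (Fin n → ℤ) //
      IsPath x.1 ∧ IsPath x.2 ∧ (∀ a ≤ n, ht x.2 a ≤ ht x.1 a) ∧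
      ht x.1 n = j + i % 2 ∧ ht x.2 n = -j + i % 2 ∧
      (∃ a, a ≤ n ∧ ht x.1 a + ht x.2 a ≤ -2*(i/2 + 1))}
      = Nat.card {x : (Fin n → ℤ) × (Fin n → ℤ) //
      IsPath x.1 ∧ IsPath x.2 ∧ (∀ a ≤ n, ht x.2 a ≤ ht x.1 a) ∧
      ht x.1 n = i + j + 2 ∧ ht x.2 n = i - j + 2} := by
    rw [cross_refl (i/2 + 1) (by omega) (j + i % 2) (-j + i % 2)]
    have hdrop : Nat.card {x : (Fin n → ℤ) × (Fin n → ℤ) //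
        IsPath x.1 ∧ IsPath x.2 ∧ (∀ a ≤ n, ht x.2 a ≤ ht x.1 a) ∧
        ht x.1 n = -2*(i/2 + 1) - (-j + i % 2) ∧ ht x.2 n = -2*(i/2 + 1) - (j + i % 2) ∧
        (∃ a, a ≤ n ∧ ht x.1 a + ht x.2 a ≤ -2*(i/2 + 1))}
        = Nat.card {x : (Fin n → ℤ) × (Fin n → ℤ) //
        IsPath x.1 ∧ IsPath x.2 ∧ (∀ a ≤ n, ht x.2 a ≤ ht x.1 a) ∧
        ht x.1 n = -(i - j + 2) ∧ ht x.2 n = -(i + j + 2)} := by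
      apply card_prop_congr
      intro x
      constructor
      · rintro ⟨h1, h2, hb, e1, e2, _⟩
        exact ⟨h1, h2, hb, by omega, by omega⟩
      · rintro ⟨h1, h2, hb, e1, e2⟩
        exact ⟨h1, h2, hb, by omega, by omega, ⟨n, le_refl n, by omega⟩⟩
    rw [hdrop, flip_pair (-(i-j+2)) (-(i+j+2))]
    apply card_prop_congr
    intro x
    constructor
    · rintro ⟨h1, h2, hb, e1, e2⟩
      exact ⟨h1, h2, hb, by omega, by omega⟩
    · rintro ⟨h1, h2, hb, e1, e2⟩
      exact ⟨h1, h2, hb, by omega, by omega⟩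
  rw [hcross1, hcross2] at hsplit
  omega

end bfinal

theorem stmt3 (n : ℕ) (i j : ℤ) (hj : 0 ≤ j) (hij : j ≤ i) (hn : i + j ≤ (n : ℤ))
    (hpar : (i + j) % 2 = (n : ℤ) % 2) :
    Nat.card {PQ : (Fin n → ℤ) × (Fin n → ℤ) //
      IsPath PQ.1 ∧ IsPath PQ.2 ∧
      (∀ a ≤ n, ht PQ.2 a ≤ ht PQ.1 a) ∧
      (∀ a ≤ n, 0 ≤ ht PQ.1 a) ∧ (∀ a ≤ n, 0 ≤ ht PQ.2 a) ∧
      i - j ≤ ht PQ.2 n ∧ ht PQ.2 n ≤ i + j ∧ i + j ≤ ht PQ.1 n} =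
    Nat.card {PQ : (Fin n → ℤ) × (Fin n → ℤ) //
      IsPath PQ.1 ∧ IsPath PQ.2 ∧
      (∀ a ≤ n, ht PQ.2 a ≤ ht PQ.1 a) ∧
      ht PQ.1 n = j + i % 2 ∧ ht PQ.2 n = -j + i % 2 ∧
      agreeMin PQ.1 PQ.2 = -(i / 2)} := by
  have hA := A_side (n := n) (i-j) (i+j) i j rfl rfl
  have hB := B_side (n := n) i j hj hij
  have hcb1 := cB_eq (n := n) (i+j) (i-j) (by omega)
  have hcb2 := cB_eq (n := n) (i+j+2) (i-j+2) (by omega)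
  have r1 : (i-j+2-2 : ℤ) = i - j := by ring
  have r2 : (i+j+2+2 : ℤ) = i+j+4 := by ring
  rw [r1, r2] at hcb2
  have pt : ((i+j) + (n:ℤ)) % 2 = 0 := by omega
  have e1 : gE n 0 (i+j+2) = fE n (i+j+2) :=
    gE0_closed (n+2) _ (by push_cast; omega) (by omega) (by omega)
  have e2 : gE n 2 (i+j) = fE n (i+j) + fE n (i+j+2) + fE n (i+j+4) :=
    gE2_closed (n+2) _ (by push_cast; omega) (by omega) (by omega)
  have e3 : gE n 0 (i-j) = hE n 0 (i-j) (i+j) + gE n 0 ((i+j)+2) :=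
    gE_window 0 (i-j) (i+j) (by omega) (by omega)
  have e4 : gE n 0 (i-j) = fE n (i-j) :=
    gE0_closed (n+2) _ (by push_cast; omega) (by omega) (by omega)
  have e5 : gE n 2 (i-j-2) = hE n 2 (i-j-2) (i+j-2) + gE n 2 ((i+j-2)+2) :=
    gE_window 2 (i-j-2) (i+j-2) (by omega) (by omega)
  have r3 : ((i+j-2)+2 : ℤ) = i+j := by ring
  rw [r3] at e5
  have e6 : gE n 2 (i-j-2) = fE n (i-j-2) + fE n ((i-j-2)+2) + fE n ((i-j-2)+4) :=
    gE2_closed (n+2) _ (by push_cast; omega) (by omega) (by omega)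
  have r4 : ((i-j-2)+2 : ℤ) = i-j := by ring
  have r5 : ((i-j-2)+4 : ℤ) = i-j+2 := by ring
  rw [r4, r5] at e6
  have r6 : ((i+j)+2 : ℤ) = i+j+2 := by ring
  rw [r6] at e3
  rw [e1, e2] at hA
  -- derive the window relations
  have hq : fE n (i-j) = hE n 0 (i-j) (i+j) + fE n (i+j+2) := by omega
  have hz : fE n (i-j-2) + fE n (i-j) + fE n (i-j+2)
      = hE n 2 (i-j-2) (i+j-2) + (fE n (i+j) + fE n (i+j+2) + fE n (i+j+4)) := by omega
  zify at hA hB hcb1 hcb2 hq hz ⊢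
  linear_combination hA + (fE n (i+j+2) : ℤ) * hz
    - ((fE n (i+j) : ℤ) + (fE n (i+j+2) : ℤ) + (fE n (i+j+4) : ℤ)) * hq - hB - hcb1 + hcb2
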